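/- arXiv:1702.05705 — 2 statements merged into one kernel-verified Lean document; each statement's English description precedes it below -/
import Mathlib

section
/- Define φ: F_8 × F_8 → F_2 by φ(x,y) = tr(y·x^6). If x, y, z are nonzero elements of F_8 with x + y + z = 0, then φ(x,y) = φ(y,z) = φ(z,x). -/
open scoped Classical
noncomputable section

abbrev F8 := GaloisField 2 3

def tr (x : F8) : F8 := x + x ^ 2 + x ^ 4

def φ (x y : F8) : F8 := tr (y * x ^ 6)

lemma h2 : (2 : F8) = 0 := by
  exact_mod_cast CharP.cast_eq_zero F8 2

lemma pow7 (x : F8) (hx : x ≠ 0) : x ^ 7 = 1 := by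
  haveI : Fintype F8 := Fintype.ofFinite _
  have hc : Fintype.card F8 = 8 := by
    rw [← Nat.card_eq_fintype_card, GaloisField.card 2 3 (by norm_num)]; norm_num
  have := FiniteField.pow_card_sub_one_eq_one x hx
  rwa [hc] at this

lemma tr_add (p q : F8) : tr (p + q) = tr p + tr q := by
  unfold tr
  linear_combination (p*q + 2*p^3*q + 3*p^2*q^2 + 2*p*q^3) * h2

lemma tr_one : tr 1 = 1 := by
  unfold tr; linear_combination h2

lemma key (u : F8) (hu : u ≠ 0) (h1 : u ≠ 1) : tr u + tr u⁻¹ = 1 := by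
  have h7 := pow7 u hu
  have hinv : u⁻¹ = u ^ 6 := by
    field_simp
    linear_combination h7 + (1 - u^7) * h2
  have hs : u + u^2 + u^3 + u^4 + u^5 + u^6 = 1 := by
    have hne : u - 1 ≠ 0 := sub_ne_zero.mpr h1
    have : (u - 1) * (u + u^2 + u^3 + u^4 + u^5 + u^6) = (u - 1) * 1 := by
      ring_nf
      linear_combination h7 - 2 * (u - 1) * (u + u^2 + u^3 + u^4 + u^5 + u^6) * h2 + h2 + (2*u^7 - 3*u) * h2
    exact mul_left_cancel₀ hne this
  rw [tr, tr, hinv]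
  have h12 : (u^6)^2 = u^5 := by linear_combination u^5 * h7
  have h24 : (u^6)^4 = u^3 := by linear_combination (u^17 + u^10 + u^3) * h7
  rw [h12, h24]
  linear_combination hs

lemma step (a b c : F8) (ha : a ≠ 0) (hb : b ≠ 0) (hc : c ≠ 0)
    (h : a + b + c = 0) : φ a b = φ b c := by
  have hcab : c = a + b := by linear_combination h - (a + b) * h2
  have hu : b * a ^ 6 ≠ 0 := mul_ne_zero hb (pow_ne_zero _ ha)
  have h1 : b * a ^ 6 ≠ 1 := by
    intro heq
    apply hc
    have hab : b = a := by
      have := pow7 a ha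
      have : b * a ^ 7 = a := by linear_combination a * heq
      rwa [pow7 a ha, mul_one] at this
    rw [hcab, hab]
    linear_combination a * h2
  have hinv : (b * a ^ 6)⁻¹ = a * b ^ 6 := by
    rw [eq_comm]; apply eq_inv_of_mul_eq_one_left
    calc a * b ^ 6 * (b * a ^ 6) = a ^ 7 * b ^ 7 := by ring
    _ = 1 := by rw [pow7 a ha, pow7 b hb, mul_one]
  have hk := key (b * a ^ 6) hu h1
  rw [hinv] at hk
  have hφbc : φ b c = tr (a * b ^ 6) + 1 := by
    rw [φ, hcab, add_mul, tr_add, ← pow_succ' b 6, pow7 b hb, tr_one]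
  rw [hφbc, φ]
  linear_combination hk - tr (a * b ^ 6) * h2

theorem phi_cyclic (x y z : F8) (hx : x ≠ 0) (hy : y ≠ 0) (hz : z ≠ 0)
    (h : x + y + z = 0) : φ x y = φ y z ∧ φ y z = φ z x := by
  exact ⟨step x y z hx hy hz h, step y z x hy hz hx (by linear_combination h)⟩
end
end

section
/- Let O be the real algebra with basis {e^x : x ∈ F_8} and multiplication e^x e^y = (-1)^{tr(y x^6)} e^{x+y}. Then O is a division algebra: every nonzero a ∈ O has a two-sided multiplicative inverse, namely a*/N(a). -/
open scoped Classical
noncomputable section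

instance : Fintype F8 := Fintype.ofFinite F8

/-- The sign `(-1)^{φ(x,y)}` where `φ(x,y) = tr(y x⁶)`. -/
def sgn (x y : F8) : ℝ := if tr (y * x ^ 6) = 0 then 1 else -1

/-- Multiplication of the twisted group algebra `ℝ_σ[F₈]`, on coordinates:
octonions are functions `F8 → ℝ`, and `e^x e^y = (-1)^{tr(y x⁶)} e^{x+y}`. -/
def omul (a b : F8 → ℝ) : F8 → ℝ := fun z => ∑ x : F8, sgn x (z + x) * a x * b (z + x)

/-- The basis element `e^x`. -/
def e (x : F8) : F8 → ℝ := fun w => if w = x then 1 else 0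

/-- Octonion conjugation: `a* = Re(a) - Im(a)`. -/
def conj (a : F8 → ℝ) : F8 → ℝ := fun w => if w = 0 then a 0 else - a w

/-- The norm `N(a) = Σ aₓ²`. -/
def N (a : F8 → ℝ) : ℝ := ∑ x : F8, (a x) ^ 2

lemma F8card : Fintype.card F8 = 8 := by
  rw [← Nat.card_eq_fintype_card]
  have := GaloisField.card 2 3 (by norm_num)
  norm_num at this ⊢; exact this

lemma F8pow8 (x : F8) : x ^ 8 = x := by
  have := FiniteField.pow_card x; rwa [F8card] at this

lemma F8pow7 {x : F8} (hx : x ≠ 0) : x ^ 7 = 1 := by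
  have h := F8pow8 x
  have : x * x ^ 7 = x * 1 := by rw [mul_one]; linear_combination h
  exact mul_left_cancel₀ hx this

lemma F8two : (2:F8) = 0 := by exact_mod_cast CharP.cast_eq_zero F8 2

lemma F8add_self (z : F8) : z + z = 0 := by linear_combination z * F8two

lemma F8add_add_cancel (z x : F8) : z + (z + x) = x := by linear_combination z * F8two

lemma tr01 (x : F8) : tr x = 0 ∨ tr x = 1 := by
  have key : tr x * (tr x - 1) = 0 := by
    unfold tr; linear_combination F8pow8 x + (x^3 + x^5 + x^6) * F8two
  rcases mul_eq_zero.1 key with h | h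
  · exact Or.inl h
  · exact Or.inr (by linear_combination h)

lemma tr_key {s : F8} (h0 : s ≠ 0) (h1 : s ≠ 1) : tr s + tr s⁻¹ = 1 := by
  have h7 : s ^ 7 = 1 := F8pow7 h0
  have hinv : s⁻¹ = s ^ 6 := inv_eq_of_mul_eq_one_right (by linear_combination h7)
  have hgeo : (s - 1) * (1 + s + s^2 + s^3 + s^4 + s^5 + s^6) = 0 := by linear_combination h7
  have hsum : 1 + s + s^2 + s^3 + s^4 + s^5 + s^6 = 0 :=
    (mul_eq_zero.1 hgeo).resolve_left (sub_ne_zero.2 h1)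
  unfold tr
  rw [hinv]
  linear_combination hsum - F8two + (s^5 + s^3 * (s^7 + 1) + s^17) * h7

lemma tr_zero : tr 0 = 0 := by unfold tr; ring

lemma sgn_zero_left (y : F8) : sgn 0 y = 1 := by simp [sgn, tr_zero]

lemma sgn_zero_right (x : F8) : sgn x 0 = 1 := by simp [sgn, tr_zero]

lemma sgn_self {x : F8} (hx : x ≠ 0) : sgn x x = -1 := by
  have : x * x ^ 6 = 1 := by linear_combination F8pow7 hx
  rw [sgn, this, tr_one, if_neg one_ne_zero]

lemma sgn_antisymm {x y : F8} (hx : x ≠ 0) (hy : y ≠ 0) (hxy : x ≠ y) : sgn x y = - sgn y x := by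
  have hx7 := F8pow7 hx
  have hy7 := F8pow7 hy
  have hs0 : y * x ^ 6 ≠ 0 := mul_ne_zero hy (pow_ne_zero _ hx)
  have hs1 : y * x ^ 6 ≠ 1 := by
    intro h
    exact hxy (by
      have : x * (y * x ^ 6) = x * 1 := by rw [h]
      rw [mul_one] at this
      have hxy' : y * x ^ 7 = x := by linear_combination this
      rw [hx7, mul_one] at hxy'; exact hxy'.symm)
  have hinv : (y * x ^ 6)⁻¹ = x * y ^ 6 := inv_eq_of_mul_eq_one_right (by
    linear_combination y^7 * hx7 + hy7)
  have hkey := tr_key hs0 hs1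
  rw [hinv] at hkey
  unfold sgn
  rcases tr01 (y * x ^ 6) with h | h
  · have h' : tr (x * y ^ 6) = 1 := by linear_combination hkey - h
    rw [if_pos h, h', if_neg one_ne_zero]; ring
  · have h' : tr (x * y ^ 6) = 0 := by linear_combination hkey - h
    rw [if_neg (show ¬ tr (y * x ^ 6) = 0 by rw [h]; exact one_ne_zero), if_pos h']

/-- the generic "pair cancellation" computation for both products -/
lemma sum_pair_zero (f : F8 → ℝ) {z : F8} (hrev : ∀ x, f (z + x) = - f x) :
    ∑ x : F8, f x = 0 := by
  have h1 : ∑ x : F8, f (z + x) = ∑ x : F8, f x := by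
    simpa using Equiv.sum_comp (Equiv.addLeft z) f
  have h2 : ∑ x : F8, f (z + x) = - ∑ x : F8, f x := by
    rw [← Finset.sum_neg_distrib]
    exact Finset.sum_congr rfl fun x _ => hrev x
  have := h1.symm.trans h2
  linarith

lemma mul_conj (a : F8 → ℝ) : omul a (conj a) = N a • e 0 := by
  funext z
  by_cases hz : z = 0
  · subst hz
    show (∑ x : F8, sgn x (0 + x) * a x * conj a (0 + x)) = _
    rw [Pi.smul_apply, smul_eq_mul, e, if_pos rfl, mul_one, N]
    apply Finset.sum_congr rfl
    intro x _
    rw [zero_add]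
    by_cases hx : x = 0
    · subst hx; rw [sgn_zero_left]; simp [conj]; ring
    · rw [sgn_self hx]; simp [conj, hx]; ring
  · rw [Pi.smul_apply, smul_eq_mul, e, if_neg hz, mul_zero]
    show (∑ x : F8, sgn x (z + x) * a x * conj a (z + x)) = 0
    apply sum_pair_zero (f := fun x => sgn x (z + x) * a x * conj a (z + x)) (z := z)
    intro x
    rw [F8add_add_cancel]
    by_cases hx : x = 0
    · subst hx
      rw [add_zero, sgn_zero_right, sgn_zero_left]
      simp [conj, hz]
      ring
    · by_cases hxz : x = z
      · subst hxz
        rw [F8add_self, sgn_zero_left, sgn_zero_right]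
        simp [conj, hz]
        ring
      · have hzx0 : z + x ≠ 0 := fun h => hxz (by linear_combination (h : z + x = 0) - z * F8two)
        have hzxx : z + x ≠ x := fun h => hz (by linear_combination (h : z + x = x))
        rw [sgn_antisymm hzx0 hx hzxx]
        simp [conj, hx, hzx0]
        ring

lemma omul_conj_mul (a : F8 → ℝ) : omul (conj a) a = N a • e 0 := by
  funext z
  by_cases hz : z = 0
  · subst hz
    show (∑ x : F8, sgn x (0 + x) * conj a x * a (0 + x)) = _
    rw [Pi.smul_apply, smul_eq_mul, e, if_pos rfl, mul_one, N]
    apply Finset.sum_congr rfl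
    intro x _
    rw [zero_add]
    by_cases hx : x = 0
    · subst hx; rw [sgn_zero_left]; simp [conj]; ring
    · rw [sgn_self hx]; simp [conj, hx]; ring
  · rw [Pi.smul_apply, smul_eq_mul, e, if_neg hz, mul_zero]
    show (∑ x : F8, sgn x (z + x) * conj a x * a (z + x)) = 0
    apply sum_pair_zero (f := fun x => sgn x (z + x) * conj a x * a (z + x)) (z := z)
    intro x
    rw [F8add_add_cancel]
    by_cases hx : x = 0
    · subst hx
      rw [add_zero, sgn_zero_right, sgn_zero_left]
      simp [conj, hz]
      ring
    · by_cases hxz : x = z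
      · subst hxz
        rw [F8add_self, sgn_zero_left, sgn_zero_right]
        simp [conj, hz]
        ring
      · have hzx0 : z + x ≠ 0 := fun h => hxz (by linear_combination (h : z + x = 0) - z * F8two)
        have hzxx : z + x ≠ x := fun h => hz (by linear_combination (h : z + x = x))
        rw [sgn_antisymm hzx0 hx hzxx]
        simp [conj, hx, hzx0]
        ring

lemma omul_smul_right (a b : F8 → ℝ) (c : ℝ) : omul a (c • b) = c • omul a b := by
  funext z
  simp only [omul, Pi.smul_apply, smul_eq_mul, Finset.mul_sum]
  apply Finset.sum_congr rfl
  intros; ring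

lemma omul_smul_left (a b : F8 → ℝ) (c : ℝ) : omul (c • a) b = c • omul a b := by
  funext z
  simp only [omul, Pi.smul_apply, smul_eq_mul, Finset.mul_sum]
  apply Finset.sum_congr rfl
  intros; ring

theorem division_algebra (a : F8 → ℝ) (ha : a ≠ 0) :
    omul a ((N a)⁻¹ • conj a) = e 0 ∧ omul ((N a)⁻¹ • conj a) a = e 0 := by
  have hex : ∃ x, a x ≠ 0 := by
    by_contra h; push_neg at h; exact ha (funext fun x => h x)
  obtain ⟨x0, hx0⟩ := hex
  have hN : N a ≠ 0 := by
    have : 0 < N a :=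
      Finset.sum_pos' (fun i _ => sq_nonneg _) ⟨x0, Finset.mem_univ _, by positivity⟩
    linarith
  constructor
  · rw [omul_smul_right, mul_conj a, smul_smul, inv_mul_cancel₀ hN, one_smul]
  · rw [omul_smul_left, omul_conj_mul a, smul_smul, inv_mul_cancel₀ hN, one_smul]
end
end
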